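/- Let b > 1 be real and d ≥ 1 an integer, and let f(r) := (b(1 − b^{−r})/(b − 1))/r² for positive integers r. Then f is minimized over r ∈ {1,…,d} at r = d, i.e., for all 1 ≤ r ≤ d: (b(1 − b^{−d})/(b − 1))/d² ≤ (b(1 − b^{−r})/(b − 1))/r². -/
import Mathlib

private lemma step_10 (b : ℝ) (hb : 1 < b) (k : ℕ) (hk : 1 ≤ k) :
    (1 - b ^ (-((k+1 : ℕ) : ℤ))) / ((k+1 : ℕ) : ℝ) ≤ (1 - b ^ (-(k : ℤ))) / (k : ℝ) := by
  have hb0 : (0:ℝ) < b := lt_trans one_pos hb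
  have hx : (0:ℝ) < b ^ k := pow_pos hb0 k
  have hk0 : (0:ℝ) < (k:ℝ) := by exact_mod_cast hk
  have hk1 : (0:ℝ) < ((k+1 : ℕ):ℝ) := by positivity
  have hbern : 1 + ((k+1 : ℕ):ℝ) * (b - 1) ≤ b ^ (k+1) := by
    have := one_add_mul_le_pow (a := b - 1) (by linarith) (k+1)
    have h : (1 + (b-1)) = b := by ring
    rw [h] at this
    exact_mod_cast this
  rw [div_le_div_iff₀ hk1 hk0]
  have e1 : b ^ (-((k+1 : ℕ) : ℤ)) = (b ^ (k+1))⁻¹ := by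
    rw [zpow_neg, zpow_natCast]
  have e2 : b ^ (-(k : ℤ)) = (b ^ k)⁻¹ := by
    rw [zpow_neg, zpow_natCast]
  rw [e1, e2]
  have hpow : b ^ (k+1) = b ^ k * b := pow_succ b k
  have hck : ((k+1 : ℕ):ℝ) = (k:ℝ) + 1 := by push_cast; ring
  rw [hpow] at hbern ⊢
  rw [hck] at hbern ⊢
  have hxb : (0:ℝ) < b ^ k * b := by positivity
  have hinv1 : (b ^ k * b) * (b ^ k * b)⁻¹ = 1 := mul_inv_cancel₀ (ne_of_gt hxb)
  have hinv2 : (b ^ k) * (b ^ k)⁻¹ = 1 := mul_inv_cancel₀ (ne_of_gt hx)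
  have hi1 : (0:ℝ) < (b ^ k * b)⁻¹ := inv_pos.mpr hxb
  have hi2 : (0:ℝ) < (b ^ k)⁻¹ := inv_pos.mpr hx
  have hle : (b ^ k * b)⁻¹ ≤ (b ^ k)⁻¹ := by
    apply inv_anti₀ hx; nlinarith
  nlinarith [hbern, hx, hk0, mul_pos hi1 hi2, mul_pos hk0 (sub_pos.mpr hb),
    mul_le_mul_of_nonneg_left hle hk0.le]

private lemma anti_10 (b : ℝ) (hb : 1 < b) :
    ∀ r d : ℕ, 1 ≤ r → r ≤ d →
      (1 - b ^ (-(d : ℤ))) / (d : ℝ) ≤ (1 - b ^ (-(r : ℤ))) / (r : ℝ) := by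
  intro r d hr hrd
  induction d, hrd using Nat.le_induction with
  | base => exact le_refl _
  | succ n hn ih =>
      exact le_trans (step_10 b hb n (le_trans hr hn)) ih

theorem stmt_10 (b : ℝ) (hb : 1 < b) (d : ℕ) (hd : 1 ≤ d) :
    ∀ r : ℕ, 1 ≤ r → r ≤ d →
      (b * (1 - b ^ (-(d : ℤ))) / (b - 1)) / (d : ℝ) ^ 2
        ≤ (b * (1 - b ^ (-(r : ℤ))) / (b - 1)) / (r : ℝ) ^ 2 := by
  intro r hr hrd
  have hb0 : (0:ℝ) < b := lt_trans one_pos hb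
  have hb1 : (0:ℝ) < b - 1 := by linarith
  have hr0 : (0:ℝ) < (r:ℝ) := by exact_mod_cast hr
  have hd0 : (0:ℝ) < (d:ℝ) := by exact_mod_cast hd
  have hnn : ∀ k : ℕ, 1 ≤ k → 0 ≤ 1 - b ^ (-(k : ℤ)) := by
    intro k hk
    have : b ^ (-(k:ℤ)) ≤ 1 := by
      rw [zpow_neg, zpow_natCast]
      rw [inv_le_one_iff₀]
      right
      exact one_le_pow₀ hb.le
    linarith
  have key : (1 - b ^ (-(d : ℤ))) / (d : ℝ) ^ 2 ≤ (1 - b ^ (-(r : ℤ))) / (r : ℝ) ^ 2 := by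
    have h1 := anti_10 b hb r d hr hrd
    have h2 : (1:ℝ)/(d:ℝ) ≤ 1/(r:ℝ) := by
      apply one_div_le_one_div_of_le hr0
      exact_mod_cast hrd
    have e : ∀ k : ℕ, 1 ≤ k → (1 - b ^ (-(k : ℤ))) / (k : ℝ) ^ 2
        = ((1 - b ^ (-(k : ℤ))) / (k : ℝ)) * (1/(k:ℝ)) := by
      intro k hk
      have hk0 : (0:ℝ) < (k:ℝ) := by exact_mod_cast hk
      rw [mul_one_div, sq, ← div_div]
    rw [e d hd, e r hr]
    apply mul_le_mul h1 h2 (by positivity)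
    exact div_nonneg (hnn r hr) hr0.le
  have ed : (b * (1 - b ^ (-(d : ℤ))) / (b - 1)) / (d : ℝ) ^ 2
      = (b / (b-1)) * ((1 - b ^ (-(d : ℤ))) / (d : ℝ) ^ 2) := by ring
  have er : (b * (1 - b ^ (-(r : ℤ))) / (b - 1)) / (r : ℝ) ^ 2
      = (b / (b-1)) * ((1 - b ^ (-(r : ℤ))) / (r : ℝ) ^ 2) := by ring
  rw [ed, er]
  exact mul_le_mul_of_nonneg_left key (by positivity)
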